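/- (Salomaa's example) Let A be a finite set with |A| = k ≥ 2, let a = (a_1,...,a_k) ∈ A^k have pairwise distinct coordinates, and let b ≠ c be elements of A. Define f : A^k → A by f(x) = b if x = a and f(x) = c otherwise. Then all k variables of f are essential, every variable identification minor of f is constant, and hence the arity gap of f equals k. -/
import Mathlib


/-- Variable `i` is essential in `f`. -/
def EssAt {A B : Type*} {n : ℕ} (f : (Fin n → A) → B) (i : Fin n) : Prop :=
  ∃ a b : Fin n → A, (∀ j, j ≠ i → a j = b j) ∧ f a ≠ f b

/-- The essential arity of `f`: the number of essential variables. -/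
noncomputable def essArity {A B : Type*} {n : ℕ} (f : (Fin n → A) → B) : ℕ :=
  Set.ncard {i : Fin n | EssAt f i}

/-- `A^n_=`: tuples with at least two equal coordinates (all of `A` when `n = 1`). -/
def Aneq (A : Type*) (n : ℕ) : Set (Fin n → A) :=
  {a | n = 1 ∨ ∃ i j : Fin n, i ≠ j ∧ a i = a j}

/-- Variable `i` is essential in the restriction of `f` to `S` (witnesses must lie in `S`). -/
def EssAtOn {A B : Type*} {n : ℕ} (f : (Fin n → A) → B) (S : Set (Fin n → A)) (i : Fin n) : Prop :=
  ∃ a b : Fin n → A, a ∈ S ∧ b ∈ S ∧ (∀ j, j ≠ i → a j = b j) ∧ f a ≠ f b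

/-- Essential arity of the restriction of `f` to `S`. -/
noncomputable def essArityOn {A B : Type*} {n : ℕ} (f : (Fin n → A) → B)
    (S : Set (Fin n → A)) : ℕ :=
  Set.ncard {i : Fin n | EssAtOn f S i}

/-- `g` is a support of `f`: they agree on `A^n_=`. -/
def IsSupport {A B : Type*} {n : ℕ} (f g : (Fin n → A) → B) : Prop :=
  ∀ a ∈ Aneq A n, g a = f a

/-- The quasi-arity of `f`: minimum essential arity of a support of `f`. -/
noncomputable def qarity {A B : Type*} {n : ℕ} (f : (Fin n → A) → B) : ℕ :=
  sInf {m | ∃ g : (Fin n → A) → B, IsSupport f g ∧ essArity g = m}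

/-- The variable identification minor `f_{i ← j}`: substitute `x_j` for `x_i`. -/
def idMinor {A B : Type*} {n : ℕ} (f : (Fin n → A) → B) (i j : Fin n) :
    (Fin n → A) → B :=
  fun a => f (Function.update a i (a j))

/-- The arity gap of `f`: minimum of `ess f - ess f_{i←j}` over pairs of distinct
essential variables. -/
noncomputable def arityGap {A B : Type*} {n : ℕ} (f : (Fin n → A) → B) : ℕ :=
  sInf {d | ∃ i j : Fin n, i ≠ j ∧ EssAt f i ∧ EssAt f j ∧
    d = essArity f - essArity (idMinor f i j)}

theorem stmt13 {A : Type*} [Fintype A] [DecidableEq A] {k : ℕ} (hk : 2 ≤ k)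
    (hcard : Fintype.card A = k) (a : Fin k → A) (ha : Function.Injective a)
    (b c : A) (hbc : b ≠ c) (f : (Fin k → A) → A)
    (hf : ∀ x : Fin k → A, f x = if x = a then b else c) :
    (∀ i : Fin k, EssAt f i) ∧
    (∀ i j : Fin k, i ≠ j → ∃ d : A, ∀ x, idMinor f i j x = d) ∧
    arityGap f = k := by
  -- Part 1: every variable is essential
  have hess : ∀ i : Fin k, EssAt f i := by
    intro i
    obtain ⟨a', ha'⟩ : ∃ a' : A, a' ≠ a i := by
      have h2 : 2 ≤ Fintype.card A := hcard ▸ hk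
      obtain ⟨x, y, hxy⟩ := Fintype.exists_pair_of_one_lt_card h2
      rcases eq_or_ne x (a i) with h | h
      · exact ⟨y, h ▸ hxy.symm⟩
      · exact ⟨x, h⟩
    refine ⟨a, Function.update a i a', ?_, ?_⟩
    · intro j hj; rw [Function.update_of_ne hj]
    · have h1 : f a = b := by rw [hf]; simp
      have h2 : f (Function.update a i a') = c := by
        rw [hf, if_neg]
        intro h
        have := congrFun h i
        rw [Function.update_self] at this
        exact ha' this
      rw [h1, h2]; exact hbc
  -- Part 2: every identification minor is constant c
  have hconst : ∀ i j : Fin k, i ≠ j → ∀ x, idMinor f i j x = c := by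
    intro i j hij x
    unfold idMinor
    rw [hf, if_neg]
    intro h
    have hi := congrFun h i
    have hj := congrFun h j
    rw [Function.update_self] at hi
    rw [Function.update_of_ne (Ne.symm hij)] at hj
    exact ha.ne hij (hi ▸ hj ▸ rfl)
  refine ⟨hess, fun i j hij => ⟨c, hconst i j hij⟩, ?_⟩
  -- Part 3
  have hessf : essArity f = k := by
    have : {i : Fin k | EssAt f i} = Set.univ := Set.eq_univ_of_forall hess
    rw [essArity, this, Set.ncard_univ]; simp
  have hminor : ∀ i j : Fin k, i ≠ j → essArity (idMinor f i j) = 0 := by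
    intro i j hij
    have : {i' : Fin k | EssAt (idMinor f i j) i'} = ∅ := by
      ext i'
      simp only [Set.mem_setOf_eq, Set.mem_empty_iff_false, iff_false]
      rintro ⟨x, y, _, hne⟩
      exact hne ((hconst i j hij x).trans (hconst i j hij y).symm)
    rw [essArity, this, Set.ncard_empty]
  have hset : {d | ∃ i j : Fin k, i ≠ j ∧ EssAt f i ∧ EssAt f j ∧
      d = essArity f - essArity (idMinor f i j)} = {k} := by
    ext d
    simp only [Set.mem_setOf_eq, Set.mem_singleton_iff]
    constructor
    · rintro ⟨i, j, hij, _, _, rfl⟩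
      rw [hessf, hminor i j hij]; omega
    · intro hd
      have h0 : 0 < k := by omega
      have h1 : 1 < k := by omega
      have h01 : (⟨0, h0⟩ : Fin k) ≠ ⟨1, h1⟩ := by
        intro h; exact absurd (congrArg Fin.val h) (by simp)
      exact ⟨_, _, h01, hess _, hess _, by rw [hessf, hminor _ _ h01, hd]; omega⟩
  rw [arityGap, hset, csInf_singleton]
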